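/- For 0 < σ < 1, z ∈ ℂ with Re(z²) > 0 (i.e. |arg z| < π/4), and n ∈ ℕ, the kernel b^{σ,z}(t) = z^{2σ}/(4^σ Γ(σ)) e^{-z²/(4t)} t^{-1-σ} satisfies ∫₀^∞ |(d^n/dt^n) b^{σ,z}(t)| t^n dt ≤ C_{n,σ} (|z|²/Re(z²))^{n+σ}, with a constant C_{n,σ} independent of z. -/

import Mathlib

open Real MeasureTheory Set

noncomputable def extKernelC (σ : ℝ) (z : ℂ) (t : ℝ) : ℂ :=
  z ^ (2 * σ : ℂ) / ((4 : ℂ) ^ (σ : ℂ) * (Real.Gamma σ : ℂ)) *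
    Complex.exp (-z ^ 2 / (4 * t)) / (t : ℂ) ^ ((1 + σ : ℝ) : ℂ)

noncomputable def myA (σ : ℝ) (z : ℂ) : ℂ :=
  z ^ (2 * σ : ℂ) / ((4 : ℂ) ^ (σ : ℂ) * (Real.Gamma σ : ℂ))

def expo (σ : ℝ) (n j : ℕ) : ℝ := -(1 + σ) - n - j

lemma expo_succ_left (σ : ℝ) (n j : ℕ) : expo σ (n+1) j = expo σ n j - 1 := by
  simp [expo]; push_cast; ring

lemma expo_succ_both (σ : ℝ) (n j : ℕ) : expo σ (n+1) (j+1) = expo σ n j - 2 := by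
  simp [expo]; push_cast; ring

lemma aux_hasDeriv (w : ℂ) (e : ℝ) {t : ℝ} (ht : 0 < t) :
    HasDerivAt (fun s : ℝ => Complex.exp (-w / s) * ((s ^ e : ℝ) : ℂ))
      (Complex.exp (-w / t) * (w * ((t ^ (e - 2) : ℝ) : ℂ) + (e : ℂ) * ((t ^ (e - 1) : ℝ) : ℂ)))
      t := by
  have htC : (t : ℂ) ≠ 0 := by exact_mod_cast ht.ne'
  have h1 : HasDerivAt (fun s : ℝ => -w / (s : ℂ)) (w / (t : ℂ) ^ 2) t := by
    have h := ((hasDerivAt_inv htC).comp_ofReal).const_mul (-w)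
    simpa [div_eq_mul_inv, neg_mul, mul_neg, neg_neg] using h
  have h2 := h1.cexp
  have h3 : HasDerivAt (fun s : ℝ => ((s ^ e : ℝ) : ℂ)) ((e * t ^ (e - 1) : ℝ) : ℂ) t :=
    (Real.hasDerivAt_rpow_const (Or.inl ht.ne')).ofReal_comp
  have h := h2.mul h3
  refine HasDerivAt.congr_deriv h ?_
  have key : ((t ^ (e - 2) : ℝ) : ℂ) = ((t ^ e : ℝ) : ℂ) / (t : ℂ) ^ 2 := by
    rw [show e - 2 = e - ((2:ℕ):ℝ) by norm_num, Real.rpow_sub ht, Real.rpow_natCast]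
    push_cast
    ring
  rw [key]
  push_cast
  ring

lemma kernel_formula (σ : ℝ) (n : ℕ) :
    ∃ c : ℕ → ℝ, ∀ (z : ℂ) (t : ℝ), 0 < t →
      iteratedDeriv n (fun s : ℝ => extKernelC σ z s) t =
        ∑ j ∈ Finset.range (n+1), myA σ z * (c j : ℂ) * (z ^ 2 / 4) ^ j *
          (Complex.exp (-(z ^ 2 / 4) / (t : ℂ)) * ((t ^ expo σ n j : ℝ) : ℂ)) := by
  induction n with
  | zero =>
    refine ⟨fun _ => 1, fun z t ht => ?_⟩
    rw [iteratedDeriv_zero]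
    have htC : (t : ℂ) ≠ 0 := by exact_mod_cast ht.ne'
    have e2 : ((t : ℂ)) ^ ((1 + σ : ℝ) : ℂ) = ((t ^ (1 + σ : ℝ) : ℝ) : ℂ) :=
      (Complex.ofReal_cpow ht.le _).symm
    have e3 : ((t ^ (1 + σ : ℝ) : ℝ) : ℂ) ≠ 0 := by
      simp only [ne_eq, Complex.ofReal_eq_zero]
      positivity
    have e4 : (t : ℝ) ^ (expo σ 0 0) = (t ^ (1 + σ : ℝ) : ℝ)⁻¹ := by
      rw [show expo σ 0 0 = -(1+σ) by simp [expo], Real.rpow_neg ht.le]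
    simp only [zero_add, Finset.sum_range_one, extKernelC, myA, pow_zero, Complex.ofReal_one, mul_one]
    rw [e4, e2]
    push_cast
    rw [show -z^2/(4*(t:ℂ)) = -(z^2/4)/(t:ℂ) by ring]
    field_simp
  | succ n IH =>
    obtain ⟨c, hc⟩ := IH
    refine ⟨fun j => (if j ≤ n then (expo σ n j) * c j else 0) +
      (if j = 0 then 0 else c (j-1)), fun z t ht => ?_⟩
    set w : ℂ := z ^ 2 / 4 with hw
    set A : ℂ := myA σ z with hA
    rw [iteratedDeriv_succ]
    have hev : iteratedDeriv n (fun s : ℝ => extKernelC σ z s) =ᶠ[nhds t]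
        (fun s : ℝ => ∑ j ∈ Finset.range (n+1), A * (c j : ℂ) * w ^ j *
          (Complex.exp (-w / (s : ℂ)) * ((s ^ expo σ n j : ℝ) : ℂ))) := by
      filter_upwards [Ioi_mem_nhds ht] with s hs using hc z s hs
    rw [hev.deriv_eq]
    have hD : HasDerivAt
        (fun s : ℝ => ∑ j ∈ Finset.range (n+1), A * (c j : ℂ) * w ^ j *
          (Complex.exp (-w / (s : ℂ)) * ((s ^ expo σ n j : ℝ) : ℂ)))
        (∑ j ∈ Finset.range (n+1), A * (c j : ℂ) * w ^ j *
          (Complex.exp (-w / (t : ℂ)) * (w * ((t ^ (expo σ n j - 2) : ℝ) : ℂ) +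
            ((expo σ n j : ℝ) : ℂ) * ((t ^ (expo σ n j - 1) : ℝ) : ℂ)))) t := by
      refine HasDerivAt.fun_sum (fun j hj => ?_)
      exact (aux_hasDeriv w (expo σ n j) ht).const_mul _
    rw [hD.deriv]
    -- now pure algebra
    have split : ∀ j ∈ Finset.range (n+2),
        A * ((((if j ≤ n then (expo σ n j) * c j else 0) +
          (if j = 0 then 0 else c (j-1)) : ℝ)) : ℂ) * w ^ j *
          (Complex.exp (-w / (t : ℂ)) * ((t ^ expo σ (n+1) j : ℝ) : ℂ)) =
        (A * (((if j ≤ n then (expo σ n j) * c j else 0) : ℝ) : ℂ) * w ^ j *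
          (Complex.exp (-w / (t : ℂ)) * ((t ^ expo σ (n+1) j : ℝ) : ℂ))) +
        (A * (((if j = 0 then 0 else c (j-1)) : ℝ) : ℂ) * w ^ j *
          (Complex.exp (-w / (t : ℂ)) * ((t ^ expo σ (n+1) j : ℝ) : ℂ))) := by
      intro j _
      push_cast
      ring
    rw [Finset.sum_congr rfl split, Finset.sum_add_distrib]
    have sum1 : ∑ j ∈ Finset.range (n+2),
        (A * (((if j ≤ n then (expo σ n j) * c j else 0) : ℝ) : ℂ) * w ^ j *
          (Complex.exp (-w / (t : ℂ)) * ((t ^ expo σ (n+1) j : ℝ) : ℂ))) =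
        ∑ j ∈ Finset.range (n+1),
          A * (c j : ℂ) * w ^ j *
            (Complex.exp (-w / (t : ℂ)) * (((expo σ n j : ℝ) : ℂ) *
              ((t ^ (expo σ n j - 1) : ℝ) : ℂ))) := by
      rw [Finset.sum_range_succ]
      rw [if_neg (by omega)]
      simp only [Complex.ofReal_zero, mul_zero, zero_mul, add_zero]
      refine Finset.sum_congr rfl (fun j hj => ?_)
      rw [if_pos (by simpa using Nat.lt_succ_iff.mp (Finset.mem_range.mp hj)),
        expo_succ_left]
      push_cast
      ring
    have sum2 : ∑ j ∈ Finset.range (n+2),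
        (A * (((if j = 0 then 0 else c (j-1)) : ℝ) : ℂ) * w ^ j *
          (Complex.exp (-w / (t : ℂ)) * ((t ^ expo σ (n+1) j : ℝ) : ℂ))) =
        ∑ j ∈ Finset.range (n+1),
          A * (c j : ℂ) * w ^ j *
            (Complex.exp (-w / (t : ℂ)) * (w * ((t ^ (expo σ n j - 2) : ℝ) : ℂ))) := by
      rw [Finset.sum_range_succ']
      simp only [eq_self_iff_true, if_true, Complex.ofReal_zero, mul_zero, zero_mul, add_zero,
        pow_zero, mul_one]
      refine Finset.sum_congr rfl (fun j hj => ?_)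
      rw [if_neg (Nat.succ_ne_zero j), Nat.add_sub_cancel, expo_succ_both]
      push_cast
      ring
    rw [sum1, sum2, ← Finset.sum_add_distrib]
    refine Finset.sum_congr rfl (fun j hj => ?_)
    ring

lemma aux_int {p r : ℝ} (hp : 0 < p) (hr : 0 < r) :
    IntegrableOn (fun t : ℝ => Real.exp (-(r/t)) * t ^ (-1 - p : ℝ)) (Ioi 0) ∧
      ∫ t in Ioi (0:ℝ), Real.exp (-(r/t)) * t ^ (-1 - p : ℝ) = (1/r) ^ p * Real.Gamma p := by
  set g : ℝ → ℝ := fun y => y ^ (p-1) * Real.exp (-(r*y)) with hgdef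
  have hg : IntegrableOn g (Ioi 0) := by
    have h := integrableOn_rpow_mul_exp_neg_mul_rpow (p := 1) (s := p-1) (b := r)
      (by linarith) zero_lt_one hr
    exact h.congr_fun (fun x hx => by beta_reduce; rw [Real.rpow_one, neg_mul]) measurableSet_Ioi
  have hpt : ∀ x ∈ Ioi (0:ℝ),
      (|(-1:ℝ)| * x ^ ((-1:ℝ) - 1)) • g (x ^ (-1:ℝ)) = Real.exp (-(r/x)) * x ^ (-1 - p : ℝ) := by
    intro x hx
    have hx0 : (0:ℝ) < x := hx
    rw [smul_eq_mul, abs_neg, abs_one, one_mul, Real.rpow_neg_one, hgdef]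
    simp only []
    rw [Real.inv_rpow hx0.le, ← Real.rpow_neg hx0.le, ← div_eq_mul_inv]
    rw [mul_comm (x ^ (-(p-1)):ℝ) (Real.exp (-(r/x)))]
    rw [← mul_assoc, mul_comm (x ^ ((-1:ℝ)-1))]
    rw [mul_assoc, ← Real.rpow_add hx0]
    norm_num
    congr 1
    ring
  constructor
  · have h1 := (integrableOn_Ioi_comp_rpow_iff g (p := -1) (by norm_num)).mpr hg
    exact h1.congr_fun hpt measurableSet_Ioi
  · have h2 := integral_comp_rpow_Ioi g (p := -1) (by norm_num)
    rw [setIntegral_congr_fun measurableSet_Ioi hpt] at h2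
    rw [h2]
    exact integral_rpow_mul_exp_neg_mul_Ioi hp hr

theorem kernel_iterated_deriv_norm_estimate (σ : ℝ) (hσ0 : 0 < σ) (hσ1 : σ < 1) (n : ℕ) :
    ∃ C : ℝ, ∀ z : ℂ, 0 < (z ^ 2).re →
      ∫ t in Ioi (0:ℝ), ‖iteratedDeriv n (fun s : ℝ => extKernelC σ z s) t‖ * t ^ n ≤
        C * (‖z‖ ^ 2 / (z ^ 2).re) ^ ((n : ℝ) + σ) := by
  obtain ⟨c, hc⟩ := kernel_formula σ n
  refine ⟨∑ j ∈ Finset.range (n+1), |c j| * Real.Gamma (σ + j) / Real.Gamma σ, ?_⟩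
  intro z hz
  set w : ℂ := z ^ 2 / 4 with hw
  set A : ℂ := myA σ z with hA
  have h4 : (4 : ℂ) = ((4 : ℝ) : ℂ) := by norm_num
  have hr : 0 < w.re := by
    rw [hw, h4, Complex.div_ofReal_re]
    exact div_pos hz (by norm_num)
  have hwne : w ≠ 0 := fun hww => by simp [hww] at hr
  have hW : 0 < ‖w‖ := norm_pos_iff.mpr hwne
  have hrW : w.re ≤ ‖w‖ := Complex.re_le_norm w
  set W := ‖w‖ with hWdef
  set r := w.re with hrdef
  set q := W / r with hq
  have hq1 : (1:ℝ) ≤ q := (one_le_div hr).mpr hrW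
  have habsz2 : ‖z‖ ^ 2 = 4 * W := by
    rw [hWdef, hw, norm_div, norm_pow]
    rw [RCLike.norm_ofNat]
    ring
  have hqeq : ‖z‖ ^ 2 / (z ^ 2).re = q := by
    have h2 : (z ^ 2).re = 4 * r := by
      rw [hrdef, hw, h4, Complex.div_ofReal_re]
      ring
    rw [habsz2, h2, hq, mul_div_mul_left _ _ (by norm_num : (4:ℝ) ≠ 0)]
  rw [hqeq]
  have hAabs : ‖A‖ = W ^ σ / Real.Gamma σ := by
    have e1 : (2 * (σ:ℂ)) = ((2*σ : ℝ) : ℂ) := by push_cast; ring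
    have e2 : ‖z ^ (2 * (σ:ℂ))‖ = ‖z‖ ^ (2*σ:ℝ) := by
      rw [e1, Complex.norm_cpow_real]
    have e3 : ‖(4:ℂ) ^ (σ:ℂ)‖ = (4:ℝ) ^ σ := by
      rw [Complex.norm_cpow_real]
      norm_num
    have e4 : ‖z‖ ^ (2*σ:ℝ) = (4*W) ^ σ := by
      rw [show (2*σ:ℝ) = ((2:ℕ):ℝ) * σ by norm_num, Real.rpow_mul (norm_nonneg z),
        Real.rpow_natCast, habsz2]
    rw [hA, myA, norm_div, norm_mul, e2, e3, e4, Complex.norm_real, Real.norm_eq_abs,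
      abs_of_pos (Real.Gamma_pos_of_pos hσ0), Real.mul_rpow (by norm_num) hW.le]
    rw [mul_div_mul_left _ _ (ne_of_gt (Real.rpow_pos_of_pos (by norm_num) σ))]
  set B : ℕ → ℝ := fun j => ‖A‖ * |c j| * W ^ j with hB
  set h : ℝ → ℝ := fun t => ∑ j ∈ Finset.range (n+1),
    B j * (Real.exp (-(r/t)) * t ^ (-1 - (σ + j) : ℝ)) with hh
  have hsj : ∀ j : ℕ, (0:ℝ) < σ + j := fun j => by positivity
  have hh_int : IntegrableOn h (Ioi 0) :=
    integrable_finset_sum _ (fun j _ => ((aux_int (hsj j) hr).1.const_mul (B j)))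
  have hterm : ∀ (j : ℕ) (t : ℝ), 0 < t →
      ‖A * (c j : ℂ) * w ^ j * (Complex.exp (-w / (t:ℂ)) * ((t ^ expo σ n j : ℝ):ℂ))‖ * t ^ n
        = B j * (Real.exp (-(r/t)) * t ^ (-1 - (σ + j) : ℝ)) := by
    intro j t ht
    have hre : (-w/(t:ℂ)).re = -(r/t) := by
      rw [neg_div, Complex.neg_re, Complex.div_ofReal_re, hrdef]
    have hpow : t ^ expo σ n j * t ^ n = t ^ (-1 - (σ + (j:ℝ)) : ℝ) := by
      rw [← Real.rpow_natCast t n, ← Real.rpow_add ht]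
      congr 1
      simp [expo]
      ring
    simp only [hB, norm_mul, norm_pow, Complex.norm_real, Real.norm_eq_abs, Complex.norm_exp,
      hre]
    rw [abs_of_nonneg (Real.rpow_nonneg ht.le _), ← hpow, hWdef]
    ring
  have hpt : ∀ t ∈ Ioi (0:ℝ),
      ‖iteratedDeriv n (fun s : ℝ => extKernelC σ z s) t‖ * t ^ n ≤ h t := by
    intro t ht
    have ht0 : (0:ℝ) < t := ht
    rw [hc z t ht0, hh]
    calc ‖∑ j ∈ Finset.range (n+1), A * (c j:ℂ) * w ^ j *
          (Complex.exp (-w / (t:ℂ)) * ((t ^ expo σ n j : ℝ):ℂ))‖ * t ^ n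
        ≤ (∑ j ∈ Finset.range (n+1), ‖A * (c j:ℂ) * w ^ j *
          (Complex.exp (-w / (t:ℂ)) * ((t ^ expo σ n j : ℝ):ℂ))‖) * t ^ n :=
          mul_le_mul_of_nonneg_right (norm_sum_le _ _) (pow_nonneg ht0.le n)
      _ = ∑ j ∈ Finset.range (n+1), ‖A * (c j:ℂ) * w ^ j *
          (Complex.exp (-w / (t:ℂ)) * ((t ^ expo σ n j : ℝ):ℂ))‖ * t ^ n := by rw [Finset.sum_mul]
      _ = ∑ j ∈ Finset.range (n+1),
          B j * (Real.exp (-(r/t)) * t ^ (-1 - (σ + j) : ℝ)) :=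
          Finset.sum_congr rfl (fun j _ => hterm j t ht0)
  have hcont : ContinuousOn (fun t : ℝ => ‖∑ j ∈ Finset.range (n+1), A * (c j:ℂ) * w ^ j *
      (Complex.exp (-w / (t:ℂ)) * ((t ^ expo σ n j : ℝ):ℂ))‖ * t ^ n) (Ioi 0) := by
    apply ContinuousOn.mul _ (continuous_pow n).continuousOn
    apply ContinuousOn.norm
    apply continuousOn_finset_sum
    intro j _
    apply ContinuousOn.mul continuousOn_const
    apply ContinuousOn.mul
    · exact Complex.continuous_exp.comp_continuousOn
        (ContinuousOn.div continuousOn_const Complex.continuous_ofReal.continuousOn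
          (fun t ht => by exact_mod_cast (mem_Ioi.mp ht).ne'))
    · exact Complex.continuous_ofReal.comp_continuousOn
        (fun t ht => (Real.continuousAt_rpow_const t _
          (Or.inl (mem_Ioi.mp ht).ne')).continuousWithinAt)
  have hmeas : AEStronglyMeasurable
      (fun t : ℝ => ‖iteratedDeriv n (fun s : ℝ => extKernelC σ z s) t‖ * t ^ n)
      (volume.restrict (Ioi 0)) := by
    refine (hcont.aestronglyMeasurable measurableSet_Ioi).congr ?_
    rw [Filter.EventuallyEq, ae_restrict_iff' measurableSet_Ioi]
    filter_upwards with t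
    intro ht
    rw [hc z t ht]
  have hInt : IntegrableOn
      (fun t : ℝ => ‖iteratedDeriv n (fun s : ℝ => extKernelC σ z s) t‖ * t ^ n) (Ioi 0) := by
    refine hh_int.mono' hmeas ?_
    rw [ae_restrict_iff' measurableSet_Ioi]
    filter_upwards with t
    intro ht
    rw [Real.norm_of_nonneg (mul_nonneg (norm_nonneg _) (pow_nonneg (le_of_lt ht) n))]
    exact hpt t ht
  calc ∫ t in Ioi (0:ℝ), ‖iteratedDeriv n (fun s : ℝ => extKernelC σ z s) t‖ * t ^ n
      ≤ ∫ t in Ioi (0:ℝ), h t := setIntegral_mono_on hInt hh_int measurableSet_Ioi hpt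
    _ = ∑ j ∈ Finset.range (n+1), B j * ((1/r) ^ (σ + (j:ℝ)) * Real.Gamma (σ + j)) := by
        rw [hh]
        rw [integral_finset_sum _ (fun j _ => ((aux_int (hsj j) hr).1.const_mul (B j)))]
        refine Finset.sum_congr rfl (fun j _ => ?_)
        rw [MeasureTheory.integral_const_mul, (aux_int (hsj j) hr).2]
    _ ≤ ∑ j ∈ Finset.range (n+1),
        (|c j| * Real.Gamma (σ + j) / Real.Gamma σ) * q ^ ((n:ℝ) + σ) := by
        refine Finset.sum_le_sum (fun j hj => ?_)
        have heq : B j * ((1/r) ^ (σ + (j:ℝ)) * Real.Gamma (σ + j))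
            = (|c j| * Real.Gamma (σ + j) / Real.Gamma σ) * q ^ (σ + (j:ℝ)) := by
          have e6 : q ^ (σ + (j:ℝ)) = W ^ (σ+(j:ℝ)) * (1/r) ^ (σ+(j:ℝ)) := by
            rw [hq, div_eq_mul_inv, ← one_div, Real.mul_rpow hW.le (by positivity)]
          have e5 : W ^ (σ+(j:ℝ)) = W ^ σ * W ^ (j:ℝ) := Real.rpow_add hW σ j
          have e7 : W ^ (j:ℝ) = W ^ j := Real.rpow_natCast W j
          rw [e6, e5, e7]
          simp only [hB, hAabs]
          have hΓ : Real.Gamma σ ≠ 0 := ne_of_gt (Real.Gamma_pos_of_pos hσ0)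
          field_simp
        rw [heq]
        refine mul_le_mul_of_nonneg_left ?_ (by positivity)
        refine Real.rpow_le_rpow_of_exponent_le hq1 ?_
        have hj' : (j:ℝ) ≤ n := by exact_mod_cast Nat.lt_succ_iff.mp (Finset.mem_range.mp hj)
        linarith
    _ = (∑ j ∈ Finset.range (n+1), |c j| * Real.Gamma (σ + j) / Real.Gamma σ) *
        q ^ ((n:ℝ) + σ) := by rw [Finset.sum_mul]
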